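/- Srivastava–Pintér type theorem (second form): for n ∈ ℕ₀ and m ∈ ℕ, 𝔊_{n,q}^{(α)}(x,y) = ∑_{k=0}^n [n choose k]_q (1/(m^{n-k-1}[k+1]_q)) · [ 2[k+1]_q ∑_{j=0}^k [k choose j]_q (1/m − 1)_q^{k-j} 𝔊_{j,q}^{(α-1)}(0,y) − ∑_{j=0}^{k+1} [k+1 choose j]_q (1/m − 1)_q^{k+1-j} 𝔊_{j,q}^{(α)}(0,y) − 𝔊_{k+1,q}^{(α)}(0,y) ] · 𝔅_{n-k,q}(mx, 0), where (a+b)_q^r = ∑_{j=0}^r [r choose j]_q q^{j(j-1)/2} a^{r-j} b^j. -/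

import Mathlib

open PowerSeries Finset

/-- The `q`-integer `[n]_q = 1 + q + ⋯ + q^(n-1)`. -/
noncomputable def qInt (q : ℂ) (n : ℕ) : ℂ := ∑ i ∈ Finset.range n, q ^ i

/-- The `q`-factorial `[n]_q!`. -/
noncomputable def qFact (q : ℂ) : ℕ → ℂ
  | 0 => 1
  | n + 1 => qFact q n * qInt q (n + 1)

/-- The Gaussian (`q`-binomial) coefficient. -/
noncomputable def qBinom (q : ℂ) (n k : ℕ) : ℂ := qFact q n / (qFact q k * qFact q (n - k))

/-- The formal power series `e_q(tx) = ∑ x^n t^n/[n]_q!`. -/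
noncomputable def qExpSeries (q : ℂ) (x : ℂ) : PowerSeries ℂ :=
  PowerSeries.mk fun n => x ^ n / qFact q n

/-- The formal power series `E_q(ty) = ∑ q^(n(n-1)/2) y^n t^n/[n]_q!`. -/
noncomputable def qExpSeries' (q : ℂ) (y : ℂ) : PowerSeries ℂ :=
  PowerSeries.mk fun n => q ^ (n * (n - 1) / 2) * y ^ n / qFact q n

/-- Generating series `(2t/(e_q(t)+1))^α e_q(tx) E_q(ty)` of the `q`-Genocchi polynomials. -/
noncomputable def qGenocchiSeries (q : ℂ) (α : ℕ) (x y : ℂ) : PowerSeries ℂ :=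
  (PowerSeries.C 2 * PowerSeries.X * (qExpSeries q 1 + 1)⁻¹) ^ α *
    qExpSeries q x * qExpSeries' q y

/-- The `q`-Genocchi polynomial `𝔊_{n,q}^{(α)}(x,y)`. -/
noncomputable def qGenocchi (q : ℂ) (α : ℕ) (x y : ℂ) (n : ℕ) : ℂ :=
  qFact q n * PowerSeries.coeff n (qGenocchiSeries q α x y)

/-- The `q`-Bernoulli polynomial `𝔅_{n,q}(x,y)`, defined via
`(t/(e_q(t)-1)) e_q(tx) E_q(ty) = ∑ 𝔅_{n,q}(x,y) t^n/[n]_q!`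
(note `t/(e_q(t)-1)` is the inverse of the series `∑ t^n/[n+1]_q!`). -/
noncomputable def qBernoulli (q : ℂ) (x y : ℂ) (n : ℕ) : ℂ :=
  qFact q n * PowerSeries.coeff n
    ((PowerSeries.mk fun k => (qFact q (k + 1))⁻¹)⁻¹ * qExpSeries q x * qExpSeries' q y)

/-- The Gauss polynomial `(x+y)_q^n = ∑_k [n k]_q q^(k(k-1)/2) x^(n-k) y^k`. -/
noncomputable def qAddPow (q : ℂ) (x y : ℂ) (n : ℕ) : ℂ :=
  ∑ k ∈ Finset.range (n + 1), qBinom q n k * q ^ (k * (k - 1) / 2) * x ^ (n - k) * y ^ k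

/-! ### Auxiliary lemmas -/

section aux
variable (q : ℂ) (hq : ∀ n : ℕ, qInt q (n + 1) ≠ 0)

@[simp] lemma qFact_zero : qFact q 0 = 1 := rfl

lemma qFact_succ (n : ℕ) : qFact q (n + 1) = qFact q n * qInt q (n + 1) := rfl

@[simp] lemma qInt_one : qInt q 1 = 1 := by simp [qInt]

@[simp] lemma qFact_one : qFact q 1 = 1 := by simp [qFact_succ]

include hq in
lemma qFact_ne_zero (n : ℕ) : qFact q n ≠ 0 := by
  induction n with
  | zero => simp
  | succ n ih => rw [qFact_succ]; exact mul_ne_zero ih (hq n)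

lemma qInt_add (a b : ℕ) : qInt q (a + b) = qInt q a + q ^ a * qInt q b := by
  rw [qInt, Finset.sum_range_add, qInt, qInt, Finset.mul_sum]
  simp [pow_add]

include hq in
@[simp] lemma qBinom_self (n : ℕ) : qBinom q n n = 1 := by
  rw [qBinom]; simp [qFact_ne_zero q hq]

include hq in
@[simp] lemma qBinom_zero (n : ℕ) : qBinom q n 0 = 1 := by
  rw [qBinom]; simp [qFact_ne_zero q hq]

include hq in
lemma qBinom_pascal {n k : ℕ} (h1 : 1 ≤ k) (h2 : k ≤ n) :
    qBinom q (n + 1) k = qBinom q n (k - 1) + q ^ k * qBinom q n k := by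
  obtain ⟨j, rfl⟩ : ∃ j, k = j + 1 := ⟨k - 1, by omega⟩
  have h3 : n - j = (n - (j + 1)) + 1 := by omega
  have h4 : n + 1 = (j + 1) + (n - j) := by omega
  have key : qInt q (n + 1) = qInt q (j + 1) + q ^ (j + 1) * qInt q (n - j) := by
    rw [h4, qInt_add]
  rw [qBinom, qBinom, qBinom, show n + 1 - (j + 1) = n - j by omega,
    show j + 1 - 1 = j from rfl, qFact_succ q n, key, h3, qFact_succ q (n - (j+1)),
    qFact_succ q j]
  have f1 := qFact_ne_zero q hq n
  have f2 := qFact_ne_zero q hq j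
  have f3 := qFact_ne_zero q hq (n - (j + 1))
  have i1 := hq j
  set F := qFact q n
  set J := qFact q j
  set I := qInt q (j + 1)
  set G := qFact q (n - (j + 1))
  set H := qInt q (n - (j + 1) + 1)
  have hH : H ≠ 0 := hq _
  have hd1 : J * (G * H) ≠ 0 := mul_ne_zero f2 (mul_ne_zero f3 hH)
  have hd2 : J * I * G ≠ 0 := mul_ne_zero (mul_ne_zero f2 i1) f3
  rw [mul_div_assoc', div_add_div _ _ hd1 hd2,
    div_eq_div_iff (mul_ne_zero (mul_ne_zero f2 i1) (mul_ne_zero f3 hH)) (mul_ne_zero hd1 hd2)]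
  ring

lemma qAddPow_zero' (x y : ℂ) : qAddPow q x y 0 = 1 := by
  simp [qAddPow, qBinom]

include hq in
lemma gauss_alternating (n : ℕ) : qAddPow q 1 (-1) (n + 1) = 0 := by
  set g : ℕ → ℂ := fun k => qBinom q n k * q ^ (k * (k + 1) / 2) * (-1) ^ k with hg
  have hterm : ∀ i ∈ Finset.range n,
      qBinom q (n + 1) (i + 1) * q ^ ((i + 1) * (i + 1 - 1) / 2) * (1 : ℂ) ^ (n + 1 - (i + 1)) *
        (-1 : ℂ) ^ (i + 1) = g (i + 1) - g i := by
    intro i hi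
    rw [Finset.mem_range] at hi
    rw [qBinom_pascal q hq (Nat.le_add_left 1 i) (by omega)]
    simp only [Nat.add_sub_cancel, one_pow]
    have he : (i + 1) * (i + 1 + 1) / 2 = (i + 1) + (i + 1) * i / 2 := by
      obtain ⟨c, hc⟩ := Nat.even_mul_succ_self i
      have h2 : (i + 1) * (i + 1 + 1) = i * (i + 1) + 2 * (i + 1) := by ring
      have h1 : (i + 1) * i = i * (i + 1) := Nat.mul_comm _ _
      rw [h2, h1, hc]
      omega
    rw [hg]
    simp only
    rw [he, pow_add, Nat.mul_comm (i + 1) i, pow_succ]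
    ring
  rw [qAddPow, Finset.sum_range_succ', Finset.sum_range_succ, Finset.sum_congr rfl hterm,
    Finset.sum_range_sub g]
  simp only [hg, qBinom_self q hq, qBinom_zero q hq, one_mul, Nat.sub_self, pow_zero,
    Nat.zero_mul, mul_one, Nat.mul_comm]
  simp [pow_succ]
  ring

@[simp] lemma qExpSeries_zero : qExpSeries q 0 = 1 := by
  ext n
  rw [qExpSeries, coeff_mk, coeff_one]
  cases n with
  | zero => simp
  | succ n => simp

@[simp] lemma qExpSeries'_zero : qExpSeries' q 0 = 1 := by
  ext n
  rw [qExpSeries', coeff_mk, coeff_one]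
  cases n with
  | zero => simp
  | succ n => simp

lemma rescale_qExpSeries (r c : ℂ) : rescale r (qExpSeries q c) = qExpSeries q (r * c) := by
  ext n
  rw [qExpSeries, qExpSeries, rescale_mk, coeff_mk, coeff_mk, mul_pow, mul_div_assoc]

include hq in
lemma qExp_mul_qExp' (a b : ℂ) :
    qExpSeries q a * qExpSeries' q b = PowerSeries.mk fun n => qAddPow q a b n / qFact q n := by
  ext n
  rw [coeff_mk, coeff_mul, Finset.Nat.sum_antidiagonal_eq_sum_range_succ_mk, qAddPow,
    Finset.sum_div, ← Finset.sum_range_reflect]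
  refine Finset.sum_congr rfl fun k hk => ?_
  rw [Finset.mem_range] at hk
  have hkn : k ≤ n := by omega
  have h1 : n - (n - k) = k := by omega
  simp only [Nat.succ_sub_one]
  rw [qExpSeries, qExpSeries', coeff_mk, coeff_mk, qBinom, h1]
  have f1 := qFact_ne_zero q hq n
  have f2 := qFact_ne_zero q hq k
  have f3 := qFact_ne_zero q hq (n - k)
  field_simp

include hq in
lemma qExp_one_mul : qExpSeries q 1 * qExpSeries' q (-1) = 1 := by
  rw [qExp_mul_qExp' q hq]
  ext n
  rw [coeff_mk, coeff_one]
  cases n with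
  | zero => simp [qAddPow_zero']
  | succ n => simp [gauss_alternating q hq]

end aux

set_option maxHeartbeats 2000000 in
/-- Srivastava–Pintér type theorem (second form). -/
theorem qGenocchi_srivastava_pinter' (q : ℂ) (hq : ∀ n : ℕ, qInt q (n + 1) ≠ 0)
    (α : ℕ) (hα : 1 ≤ α) (m : ℕ) (hm : 1 ≤ m) (n : ℕ) (x y : ℂ) :
    qGenocchi q α x y n =
      ∑ k ∈ Finset.range (n + 1),
        qBinom q n k * ((m : ℂ) ^ ((k : ℤ) + 1 - (n : ℤ)) / qInt q (k + 1)) *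
          (2 * qInt q (k + 1) *
              (∑ j ∈ Finset.range (k + 1),
                qBinom q k j * qAddPow q ((m : ℂ)⁻¹) (-1) (k - j) *
                  qGenocchi q (α - 1) 0 y j) -
            (∑ j ∈ Finset.range (k + 2),
              qBinom q (k + 1) j * qAddPow q ((m : ℂ)⁻¹) (-1) (k + 1 - j) *
                qGenocchi q α 0 y j) -
            qGenocchi q α 0 y (k + 1)) *
          qBernoulli q ((m : ℂ) * x) 0 (n - k) := by
  have hm0 : (m : ℂ) ≠ 0 := Nat.cast_ne_zero.mpr (by omega)
  set r : ℂ := (m : ℂ)⁻¹ with hr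
  have hrm : (m : ℂ) * r = 1 := mul_inv_cancel₀ hm0
  set e := qExpSeries q 1 with he
  set Ey := qExpSeries' q y with hEy
  set En := qExpSeries' q (-1) with hEn
  set Φ' : PowerSeries ℂ := (C 2 * X * (e + 1)⁻¹) ^ (α - 1) with hΦ'
  set Gα : PowerSeries ℂ := (C 2 * X * (e + 1)⁻¹) ^ α * Ey with hGα
  set Gα' : PowerSeries ℂ := Φ' * Ey with hGα'
  set M : PowerSeries ℂ := PowerSeries.mk fun k => (qFact q (k + 1))⁻¹ with hM
  have hconstM : constantCoeff M ≠ 0 := by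
    rw [hM, constantCoeff_mk]; simp
  have hMinv : M * M⁻¹ = 1 := PowerSeries.mul_inv_cancel _ hconstM
  have hconste : constantCoeff (e + 1) ≠ 0 := by
    rw [map_add, map_one, he, qExpSeries, constantCoeff_mk]
    norm_num
  have he1 : (e + 1) * (e + 1)⁻¹ = 1 := PowerSeries.mul_inv_cancel _ hconste
  have heE : e * En = 1 := qExp_one_mul q hq
  have hpow : (C 2 * X * (e + 1)⁻¹) ^ α = C 2 * X * (e + 1)⁻¹ * Φ' := by
    rw [hΦ', ← pow_succ']
    congr 1
    omega
  have key1 : e * Gα = C 2 * X * Gα' - Gα := by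
    have h2 : (e + 1) * Gα = C 2 * X * Gα' := by
      rw [hGα, hpow, hGα']
      rw [show (e + 1) * (C 2 * X * (e + 1)⁻¹ * Φ' * Ey)
          = (e + 1) * (e + 1)⁻¹ * (C 2 * X * (Φ' * Ey)) by ring, he1, one_mul]
    calc e * Gα = (e + 1) * Gα - Gα := by ring
    _ = C 2 * X * Gα' - Gα := by rw [h2]
  have hXM : X * M = e - 1 := by
    ext k
    cases k with
    | zero =>
      simp only [coeff_zero_eq_constantCoeff_apply, map_mul, map_sub, map_one,
        constantCoeff_X, zero_mul, he, qExpSeries, constantCoeff_mk]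
      norm_num
    | succ k =>
      rw [coeff_succ_X_mul, hM, coeff_mk, map_sub, he, qExpSeries, coeff_mk, coeff_one,
        if_neg (Nat.succ_ne_zero k), sub_zero, inv_eq_one_div, one_pow]
  have hXrM : X * rescale r M = C (m : ℂ) * (rescale r e - 1) := by
    have h := congrArg (rescale r) hXM
    rw [map_mul, map_sub, map_one, rescale_X] at h
    calc X * rescale r M
        = C (m : ℂ) * (C r * X * rescale r M) := by
          rw [show C (m : ℂ) * (C r * X * rescale r M)
              = C (m : ℂ) * C r * (X * rescale r M) by ring, ← map_mul, hrm, map_one, one_mul]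
    _ = C (m : ℂ) * (rescale r e - 1) := by rw [h]
  set K : PowerSeries ℂ := Gα * rescale r M with hK
  set F : PowerSeries ℂ := PowerSeries.mk fun j => qAddPow q r (-1) j / qFact q j with hF
  have hFe : rescale r e * En = F := by
    rw [he, rescale_qExpSeries, mul_one, hEn, qExp_mul_qExp' q hq, hF]
  have key2 : X * K = C (m : ℂ) * (C 2 * (X * (F * Gα')) - F * Gα - Gα) := by
    calc X * K = Gα * (X * rescale r M) := by rw [hK]; ring
    _ = C (m : ℂ) * (rescale r e * Gα - Gα) := by rw [hXrM]; ring
    _ = C (m : ℂ) * (rescale r e * (En * (e * Gα)) - Gα) := by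
        rw [show rescale r e * (En * (e * Gα)) = rescale r e * (e * En * Gα) by ring, heE]
        ring_nf
    _ = C (m : ℂ) * (rescale r e * En * (C 2 * X * Gα' - Gα) - Gα) := by
        rw [key1]; ring_nf
    _ = C (m : ℂ) * (C 2 * (X * (F * Gα')) - F * Gα - Gα) := by
        rw [hFe]; ring_nf
  have key3 : qGenocchiSeries q α x y = K * rescale r (M⁻¹ * qExpSeries q ((m : ℂ) * x)) := by
    have hx : r * ((m : ℂ) * x) = x := by rw [hr]; field_simp
    rw [map_mul, rescale_qExpSeries, hx, hK]
    have h5 : Gα * rescale r M * (rescale r M⁻¹ * qExpSeries q x)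
        = Gα * rescale r (M * M⁻¹) * qExpSeries q x := by rw [map_mul]; ring
    rw [h5, hMinv, map_one, mul_one, qGenocchiSeries, hGα, ← he, ← hEy]
    ring
  have hcoeffG : ∀ (β : ℕ) (j : ℕ), (coeff j) ((C 2 * X * (e + 1)⁻¹) ^ β * Ey)
      = qGenocchi q β 0 y j / qFact q j := by
    intro β j
    rw [qGenocchi, qGenocchiSeries, ← he, qExpSeries_zero, mul_one, ← hEy,
      eq_div_iff (qFact_ne_zero q hq j)]
    ring
  have hcoeffGα : ∀ j, (coeff j) Gα = qGenocchi q α 0 y j / qFact q j := fun j => by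
    rw [hGα]; exact hcoeffG α j
  have hcoeffGα' : ∀ j, (coeff j) Gα' = qGenocchi q (α - 1) 0 y j / qFact q j := fun j => by
    rw [hGα', hΦ']; exact hcoeffG (α - 1) j
  have hFGcoeff : ∀ (G : PowerSeries ℂ) (k : ℕ), (coeff k) (F * G)
      = ∑ j ∈ Finset.range (k + 1),
        qAddPow q r (-1) (k - j) / qFact q (k - j) * (coeff j) G := by
    intro G k
    rw [coeff_mul, Finset.Nat.sum_antidiagonal_eq_sum_range_succ_mk, ← Finset.sum_range_reflect]
    refine Finset.sum_congr rfl fun j hj => ?_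
    rw [Finset.mem_range] at hj
    simp only [Nat.succ_sub_one]
    rw [hF, coeff_mk, show k - (k - j) = j by omega]
  have coeffK : ∀ k : ℕ, (coeff k) K = (m : ℂ) *
      (2 * ∑ j ∈ Finset.range (k + 1), qAddPow q r (-1) (k - j) / qFact q (k - j) *
          (qGenocchi q (α - 1) 0 y j / qFact q j)
        - ∑ j ∈ Finset.range (k + 2), qAddPow q r (-1) (k + 1 - j) / qFact q (k + 1 - j) *
          (qGenocchi q α 0 y j / qFact q j)
        - qGenocchi q α 0 y (k + 1) / qFact q (k + 1)) := by
    intro k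
    rw [← coeff_succ_X_mul k K, key2, coeff_C_mul, map_sub, map_sub, coeff_C_mul,
      coeff_succ_X_mul, hFGcoeff, hFGcoeff, hcoeffGα (k + 1)]
    simp only [hcoeffGα', hcoeffGα]
  have hBcoeff : ∀ i : ℕ, (coeff i) (M⁻¹ * qExpSeries q ((m : ℂ) * x))
      = qBernoulli q ((m : ℂ) * x) 0 i / qFact q i := by
    intro i
    rw [qBernoulli, qExpSeries'_zero, mul_one, ← hM, eq_div_iff (qFact_ne_zero q hq i)]
    ring
  have hsum1 : ∀ (G : ℕ → ℂ) (k : ℕ), (∑ j ∈ Finset.range (k + 1),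
      qAddPow q r (-1) (k - j) / qFact q (k - j) * (G j / qFact q j))
      = (∑ j ∈ Finset.range (k + 1), qBinom q k j * qAddPow q r (-1) (k - j) * G j)
        / qFact q k := by
    intro G k
    rw [Finset.sum_div]
    refine Finset.sum_congr rfl fun j hj => ?_
    rw [Finset.mem_range] at hj
    have hjk : j ≤ k := by omega
    rw [qBinom]
    have f1 := qFact_ne_zero q hq k
    have f2 := qFact_ne_zero q hq j
    have f3 := qFact_ne_zero q hq (k - j)
    field_simp
  rw [qGenocchi, key3, coeff_mul, Finset.Nat.sum_antidiagonal_eq_sum_range_succ_mk,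
    Finset.mul_sum]
  refine Finset.sum_congr rfl fun k hk => ?_
  rw [Finset.mem_range] at hk
  have hkn : k ≤ n := by omega
  rw [coeff_rescale, hBcoeff, coeffK, hsum1 (qGenocchi q (α - 1) 0 y) k,
    hsum1 (qGenocchi q α 0 y) (k + 1)]
  have hmpow : (m : ℂ) ^ ((k : ℤ) + 1 - (n : ℤ)) = (m : ℂ) * r ^ (n - k) := by
    have h7 : (k : ℤ) + 1 - (n : ℤ) = 1 - ((n - k : ℕ) : ℤ) := by
      rw [Nat.cast_sub hkn]; ring
    rw [h7, zpow_sub₀ hm0, zpow_one, zpow_natCast, hr, inv_pow, div_eq_mul_inv]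
  rw [hmpow, qBinom, qFact_succ q k]
  have f1 := qFact_ne_zero q hq n
  have f2 := qFact_ne_zero q hq k
  have f3 := qFact_ne_zero q hq (n - k)
  have i1 := hq k
  set S1 := ∑ j ∈ Finset.range (k + 1),
    qBinom q k j * qAddPow q r (-1) (k - j) * qGenocchi q (α - 1) 0 y j with hS1
  set S2 := ∑ j ∈ Finset.range (k + 2),
    qBinom q (k + 1) j * qAddPow q r (-1) (k + 1 - j) * qGenocchi q α 0 y j with hS2
  set G2 := qGenocchi q α 0 y (k + 1) with hG2
  set B := qBernoulli q ((m : ℂ) * x) 0 (n - k) with hB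
  set Fk := qFact q k with hFk
  set Fn := qFact q n with hFn
  set Fnk := qFact q (n - k) with hFnk
  set Ik := qInt q (k + 1) with hIk
  have hcomb : 2 * (S1 / Fk) - S2 / (Fk * Ik) - G2 / (Fk * Ik)
      = (2 * Ik * S1 - S2 - G2) / (Fk * Ik) := by
    field_simp
  rw [hcomb]
  have final : ∀ Z W : ℂ, Fn * (↑m * (Z / (Fk * Ik)) * (r ^ (k, n - k).2 * (W / Fnk)))
      = Fn / (Fk * Fnk) * (↑m * r ^ (n - k) / Ik) * Z * W := by
    intro Z W
    show Fn * (↑m * (Z / (Fk * Ik)) * (r ^ (n - k) * (W / Fnk)))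
      = Fn / (Fk * Fnk) * (↑m * r ^ (n - k) / Ik) * Z * W
    field_simp
  exact final _ _
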